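/- (Andréief identity) For functions g_1,…,g_N and h_1,…,h_N on a measure space (X,σ), (1/N!)·∫_{X^N} det(g_j(x_k))·det(h_j(x_k)) ∏ dσ(x_k) = det(∫_X g_j(x)h_k(x) dσ(x))_{j,k=1}^N, whenever both sides are well-defined. -/

import Mathlib

open Matrix MeasureTheory Equiv

/-- Algebraic part of the Andréief identity: the double sum over permutations of
signed products of matrix entries equals `N! * det A`. -/
lemma andreief_perm_sum {N : ℕ} (A : Matrix (Fin N) (Fin N) ℂ) :
    ∑ π : Perm (Fin N), ∑ τ : Perm (Fin N),
      (((Perm.sign π : ℤ) : ℂ) * ((Perm.sign τ : ℤ) : ℂ)) * ∏ k, A (π k) (τ k)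
      = (Nat.factorial N : ℂ) * A.det := by
  have hsq : ∀ π : Perm (Fin N), ((Perm.sign π : ℤ) : ℂ) * ((Perm.sign π : ℤ) : ℂ) = 1 := by
    intro π
    rcases Int.units_eq_one_or (Perm.sign π) with h | h <;> simp [h]
  have hinner : ∀ π : Perm (Fin N),
      ∑ τ : Perm (Fin N),
        (((Perm.sign π : ℤ) : ℂ) * ((Perm.sign τ : ℤ) : ℂ)) * ∏ k, A (π k) (τ k)
        = A.det := by
    intro π
    rw [show A.det = Aᵀ.det from (det_transpose A).symm, det_apply']
    refine Fintype.sum_equiv (Equiv.mulRight π⁻¹) _ _ fun τ => ?_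
    simp only [Equiv.coe_mulRight, transpose_apply]
    have hprod : ∏ j, A j ((τ * π⁻¹) j) = ∏ k, A (π k) (τ k) := by
      rw [← Equiv.prod_comp π (fun j => A j ((τ * π⁻¹) j))]
      simp [Perm.mul_apply]
    have hsign : ((Perm.sign (τ * π⁻¹) : ℤ) : ℂ)
        = ((Perm.sign π : ℤ) : ℂ) * ((Perm.sign τ : ℤ) : ℂ) := by
      rw [Perm.sign_mul, Perm.sign_inv]
      push_cast
      ring
    rw [hprod, hsign]
  simp only [hinner, Finset.sum_const, Finset.card_univ, Fintype.card_perm, Fintype.card_fin,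
    nsmul_eq_mul]

theorem andreief_identity {X : Type*} [MeasurableSpace X] (σ : Measure X) [SigmaFinite σ]
    (N : ℕ) (g h : Fin N → X → ℂ)
    (hg : ∀ j, Integrable (g j) σ) (hh : ∀ j, Integrable (h j) σ)
    (hgh : ∀ j k, Integrable (fun x => g j x * h k x) σ)
    (hint : Integrable
      (fun x : Fin N → X =>
        det (of fun j k : Fin N => g j (x k)) * det (of fun j k : Fin N => h j (x k)))
      (Measure.pi fun _ => σ)) :
    (1 / (Nat.factorial N : ℂ)) *
      ∫ x : Fin N → X,
        det (of fun j k : Fin N => g j (x k)) * det (of fun j k : Fin N => h j (x k))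
          ∂(Measure.pi fun _ => σ) =
    det (of fun j k : Fin N => ∫ x, g j x * h k x ∂σ) := by
  letI : MeasureSpace X := ⟨σ⟩
  have hI : ∀ π τ : Perm (Fin N),
      Integrable (fun x : Fin N → X =>
        (((Perm.sign π : ℤ) : ℂ) * ((Perm.sign τ : ℤ) : ℂ)) *
          ∏ k, g (π k) (x k) * h (τ k) (x k)) (Measure.pi fun _ => σ) :=
    fun π τ => (Integrable.fintype_prod (f := fun k x => g (π k) x * h (τ k) x)
      (fun k => hgh (π k) (τ k))).const_mul _
  have expand : ∀ x : Fin N → X,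
      det (of fun j k : Fin N => g j (x k)) * det (of fun j k : Fin N => h j (x k))
        = ∑ π : Perm (Fin N), ∑ τ : Perm (Fin N),
            (((Perm.sign π : ℤ) : ℂ) * ((Perm.sign τ : ℤ) : ℂ)) *
              ∏ k, g (π k) (x k) * h (τ k) (x k) := by
    intro x
    rw [det_apply', det_apply', Finset.sum_mul_sum]
    refine Finset.sum_congr rfl fun π _ => Finset.sum_congr rfl fun τ _ => ?_
    simp only [of_apply, Finset.prod_mul_distrib]
    ring
  have key : ∫ x : Fin N → X,
      det (of fun j k : Fin N => g j (x k)) * det (of fun j k : Fin N => h j (x k))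
        ∂(Measure.pi fun _ => σ)
      = ∑ π : Perm (Fin N), ∑ τ : Perm (Fin N),
          (((Perm.sign π : ℤ) : ℂ) * ((Perm.sign τ : ℤ) : ℂ)) *
            ∏ k, ∫ x : X, g (π k) x * h (τ k) x ∂σ := by
    simp_rw [expand]
    rw [integral_finset_sum _ (fun π _ => integrable_finset_sum _ (fun τ _ => hI π τ))]
    refine Finset.sum_congr rfl fun π _ => ?_
    rw [integral_finset_sum _ (fun τ _ => hI π τ)]
    refine Finset.sum_congr rfl fun τ _ => ?_
    rw [integral_const_mul]
    congr 1
    exact integral_fintype_prod_eq_prod (ι := Fin N) (f := fun k x => g (π k) x * h (τ k) x)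
  rw [key]
  have := andreief_perm_sum (of fun j k : Fin N => ∫ x, g j x * h k x ∂σ)
  simp only [of_apply] at this
  rw [this]
  have hfac : (Nat.factorial N : ℂ) ≠ 0 := Nat.cast_ne_zero.mpr (Nat.factorial_ne_zero N)
  field_simp
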